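/- Let Q be a finite quiver without sources. For each integer l, the set B^l₀ = {α ζ_{(p,q)} | i ∈ Q₀, (p,q) ∈ Λ^l_i, α ∈ Q₁ with s(α) = i} is a k-basis of Ker δ^l, and B^{l+1}₀ is a k-basis of Im δ^l. -/

import Mathlib

noncomputable section

/-- A finite quiver: finite sets of vertices and arrows, with source and target maps. -/
structure FQ where
  V : Type
  E : Type
  [fV : Fintype V]
  [fE : Fintype E]
  [dV : DecidableEq V]
  [dE : DecidableEq E]
  s : E → V
  t : E → V

attribute [instance] FQ.fV FQ.fE FQ.dV FQ.dE

/-- `Q` has no sources: every vertex admits an arrow terminating at it. -/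
def FQ.NoSources (Q : FQ) : Prop := ∀ i : Q.V, ∃ e : Q.E, Q.t e = i

/-- The opposite quiver. -/
def FQ.op (Q : FQ) : FQ := { V := Q.V, E := Q.E, s := Q.t, t := Q.s }

/-- Paths in the quiver `Q` from a vertex to a vertex; `cons p e he` is the path
`e ∘ p` obtained by composing an arrow `e` after the path `p` (paths are written
from right to left). -/
inductive QP (Q : FQ) : Q.V → Q.V → Type
  | nil (i : Q.V) : QP Q i i
  | cons {i j : Q.V} (p : QP Q i j) (e : Q.E) (he : Q.s e = j) : QP Q i (Q.t e)

namespace QP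

variable {Q : FQ}

/-- The length of a path. -/
def length : ∀ {i j : Q.V}, QP Q i j → ℕ
  | _, _, .nil _ => 0
  | _, _, .cons p _ _ => length p + 1

/-- The first (rightmost) arrow of a path, if any. -/
def firstArrow : ∀ {i j : Q.V}, QP Q i j → Option Q.E
  | _, _, .nil _ => none
  | _, _, .cons p e _ => some ((firstArrow p).getD e)

/-- The last (leftmost) arrow of a path, if any. -/
def lastArrow : ∀ {i j : Q.V}, QP Q i j → Option Q.E
  | _, _, .nil _ => none
  | _, _, .cons _ e _ => some e

/-- Transport of a path along an equality of its starting vertices. -/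
def castSrc {i i' j : Q.V} (h : i = i') (p : QP Q i j) : QP Q i' j := h ▸ p

/-- Extend a path at its starting vertex by an arrow (`p ↦ p ∘ e`). -/
def preCons (e : Q.E) : ∀ {j : Q.V}, QP Q (Q.t e) j → QP Q (Q.s e) j
  | _, .nil _ => .cons (.nil (Q.s e)) e rfl
  | _, .cons p f hf => .cons (preCons e p) f hf

lemma length_castSrc {i i' j : Q.V} (h : i = i') (p : QP Q i j) :
    (castSrc h p).length = p.length := by subst h; rfl

lemma length_preCons (e : Q.E) : ∀ {j : Q.V} (p : QP Q (Q.t e) j),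
    (preCons e p).length = p.length + 1
  | _, .nil _ => by simp [preCons, length]
  | _, .cons p f hf => by
      show (QP.cons (preCons e p) f hf).length = _
      simp [length, length_preCons e p]

end QP

/-- With respect to a choice `asc` of an *associated* arrow terminating at each
non-source vertex, `IsAssoc Q asc a` says that the arrow `a` is the associated arrow
terminating at its target. -/
def IsAssoc (Q : FQ) (asc : ∀ i : Q.V, (∃ e, Q.t e = i) → Q.E) (a : Q.E) : Prop :=
  asc (Q.t a) ⟨a, rfl⟩ = a

/-- `(p, q)` is an *associated pair*: the paths `p` and `q` start at the same vertex,
and either one of them is trivial, or their first arrows differ, or their common first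
arrow is not associated. -/
def AssocPair (Q : FQ) (asc : ∀ i : Q.V, (∃ e, Q.t e = i) → Q.E)
    {i j j' : Q.V} (p : QP Q i j) (q : QP Q i j') : Prop :=
  ∀ a : Q.E, p.firstArrow = some a → q.firstArrow = some a → ¬ IsAssoc Q asc a

lemma assocPair_nil_left {Q : FQ} {asc : ∀ i : Q.V, (∃ e, Q.t e = i) → Q.E}
    {i j : Q.V} (q : QP Q i j) : AssocPair Q asc (QP.nil i) q := by
  intro a h
  simp [QP.firstArrow] at h

lemma assocPair_nil_right {Q : FQ} {asc : ∀ i : Q.V, (∃ e, Q.t e = i) → Q.E}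
    {i j : Q.V} (p : QP Q i j) : AssocPair Q asc p (QP.nil i) := by
  intro a _ h
  simp [QP.firstArrow] at h

/-- The index set `Λ^l_i` (for `i = x.i`): associated pairs `(p, q)` with
`t(p) = i` and `l(q) - l(p) = l`. -/
structure Lam (Q : FQ) (asc : ∀ i : Q.V, (∃ e, Q.t e = i) → Q.E) (l : ℤ) where
  a : Q.V              -- the common starting vertex of `p` and `q`
  i : Q.V              -- the terminating vertex of `p`
  b : Q.V              -- the terminating vertex of `q`
  p : QP Q a i
  q : QP Q a b
  ok : AssocPair Q asc p q
  deg : (q.length : ℤ) - (p.length : ℤ) = l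

instance {Q : FQ} {asc : ∀ i : Q.V, (∃ e, Q.t e = i) → Q.E} {l : ℤ} :
    DecidableEq (Lam Q asc l) := Classical.decEq _
/-- Generators of the path algebra `kQ`. -/
inductive AGen (Q : FQ)
  | vtx (i : Q.V)
  | ar (e : Q.E)

/-- The defining relations of the radical square zero algebra `A = kQ/J²`:
the trivial paths are orthogonal idempotents summing to the unit, arrows are unital
with respect to the trivial paths at their endpoints, and any product of two arrows
vanishes. -/
inductive ARel (k : Type) [Field k] (Q : FQ) :
    FreeAlgebra k (AGen Q) → FreeAlgebra k (AGen Q) → Prop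
  | vtx_mul (i j : Q.V) :
      ARel k Q (FreeAlgebra.ι k (AGen.vtx i) * FreeAlgebra.ι k (AGen.vtx j))
        (if i = j then FreeAlgebra.ι k (AGen.vtx i) else 0)
  | sum_vtx : ARel k Q (∑ i : Q.V, FreeAlgebra.ι k (AGen.vtx i)) 1
  | vtx_ar (e : Q.E) :
      ARel k Q (FreeAlgebra.ι k (AGen.vtx (Q.t e)) * FreeAlgebra.ι k (AGen.ar e))
        (FreeAlgebra.ι k (AGen.ar e))
  | ar_vtx (e : Q.E) :
      ARel k Q (FreeAlgebra.ι k (AGen.ar e) * FreeAlgebra.ι k (AGen.vtx (Q.s e)))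
        (FreeAlgebra.ι k (AGen.ar e))
  | rad_sq (e f : Q.E) :
      ARel k Q (FreeAlgebra.ι k (AGen.ar e) * FreeAlgebra.ι k (AGen.ar f)) 0

/-- The radical square zero algebra `A = kQ/J²` of the finite quiver `Q`. -/
abbrev AlgA (k : Type) [Field k] (Q : FQ) := RingQuot (ARel k Q)

/-- The image `e_i` in `A` of the trivial path at the vertex `i`. -/
def vtxA (k : Type) [Field k] (Q : FQ) (i : Q.V) : AlgA k Q :=
  RingQuot.mkAlgHom k (ARel k Q) (FreeAlgebra.ι k (AGen.vtx i))

/-- The image `α` in `A` of an arrow `α`. -/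
def arA (k : Type) [Field k] (Q : FQ) (e : Q.E) : AlgA k Q :=
  RingQuot.mkAlgHom k (ARel k Q) (FreeAlgebra.ι k (AGen.ar e))

lemma arA_mul_vtxA (k : Type) [Field k] (Q : FQ) (e : Q.E) :
    arA k Q e * vtxA k Q (Q.s e) = arA k Q e := by
  have h := RingQuot.mkAlgHom_rel k (ARel.ar_vtx (k := k) (Q := Q) e)
  simpa [vtxA, arA, map_mul] using h

/-- The indecomposable projective left `A`-module `P_i = A e_i`. -/
def Pmod (k : Type) [Field k] (Q : FQ) (i : Q.V) : Submodule (AlgA k Q) (AlgA k Q) :=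
  Submodule.span (AlgA k Q) {vtxA k Q i}

lemma vtxA_mem (k : Type) [Field k] (Q : FQ) (i : Q.V) : vtxA k Q i ∈ Pmod k Q i :=
  Submodule.mem_span_singleton_self _

lemma arA_mem (k : Type) [Field k] (Q : FQ) (e : Q.E) {i : Q.V} (he : Q.s e = i) :
    arA k Q e ∈ Pmod k Q i := by
  subst he
  rw [← arA_mul_vtxA k Q e]
  simpa [smul_eq_mul] using
    Submodule.smul_mem (Pmod k Q (Q.s e)) (arA k Q e) (vtxA_mem k Q (Q.s e))

/-- The `l`-th component `P^l = ⊕_{i ∈ Q₀} P_i^{(Λ^l_i)}` of the projective Leavitt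
complex. -/
abbrev PL (k : Type) [Field k] (Q : FQ) (asc : ∀ i : Q.V, (∃ e, Q.t e = i) → Q.E)
    (l : ℤ) : Type :=
  Π₀ x : Lam Q asc l, ↥(Pmod k Q x.i)

instance PL.instAddCommGroup (k : Type) [Field k] (Q : FQ)
    (asc : ∀ i : Q.V, (∃ e, Q.t e = i) → Q.E) (l : ℤ) :
    AddCommGroup (PL k Q asc l) :=
  @DFinsupp.addCommGroup (Lam Q asc l) (fun x => ↥(Pmod k Q x.i)) (fun _ => inferInstance)
/-- The basis element `e_i ζ_{(p,q)}` of `P^l`, for `x = (p, q) ∈ Λ^l_i`. -/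
def zE {k : Type} [Field k] {Q : FQ} {asc : ∀ i : Q.V, (∃ e, Q.t e = i) → Q.E}
    {l : ℤ} (x : Lam Q asc l) : PL k Q asc l :=
  DFinsupp.single x ⟨vtxA k Q x.i, vtxA_mem k Q x.i⟩

/-- The basis element `α ζ_{(p,q)}` of `P^l`, for `x = (p, q) ∈ Λ^l_i` and an arrow
`α` with `s(α) = i`. -/
def zA {k : Type} [Field k] {Q : FQ} {asc : ∀ i : Q.V, (∃ e, Q.t e = i) → Q.E}
    {l : ℤ} (x : Lam Q asc l) (e : Q.E) (he : Q.s e = x.i) : PL k Q asc l :=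
  DFinsupp.single x ⟨arA k Q e, arA_mem k Q e he⟩

/-- The family of `A`-linear maps `δ^l : P^l → P^{l+1}` is *the differential of the
projective Leavitt complex* when it satisfies the defining formulas:
`δ^l(α ζ_{(p,q)}) = 0`; `δ^l(e_i ζ_{(βp̂, q)}) = β ζ_{(p̂, q)}`; and
`δ^l(e_i ζ_{(e_i, q)}) = ∑_{β : t(β) = i} β ζ_{(e_{s(β)}, qβ)}`. -/
def IsLeavittDiff (k : Type) [Field k] (Q : FQ)
    (asc : ∀ i : Q.V, (∃ e, Q.t e = i) → Q.E)
    (δ : ∀ l : ℤ, PL k Q asc l →ₗ[AlgA k Q] PL k Q asc (l + 1)) : Prop :=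
  (∀ (l : ℤ) (x : Lam Q asc l) (e : Q.E) (he : Q.s e = x.i), δ l (zA x e he) = 0) ∧
  (∀ (l : ℤ) (a j b : Q.V) (p' : QP Q a j) (e : Q.E) (he : Q.s e = j) (q : QP Q a b)
      (ok : AssocPair Q asc (QP.cons p' e he) q)
      (dg : (q.length : ℤ) - ((QP.cons p' e he).length : ℤ) = l)
      (ok' : AssocPair Q asc p' q)
      (dg' : (q.length : ℤ) - (p'.length : ℤ) = l + 1),
      δ l (zE ⟨a, Q.t e, b, QP.cons p' e he, q, ok, dg⟩) =
        zA (⟨a, j, b, p', q, ok', dg'⟩ : Lam Q asc (l + 1)) e he) ∧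
  (∀ (l : ℤ) (a b : Q.V) (q : QP Q a b)
      (ok : AssocPair Q asc (QP.nil a) q)
      (dg : (q.length : ℤ) - ((QP.nil a).length : ℤ) = l),
      δ l (zE ⟨a, a, b, QP.nil a, q, ok, dg⟩) =
        ∑ e : {e : Q.E // Q.t e = a},
          zA (⟨Q.s e.1, Q.s e.1, b, QP.nil (Q.s e.1),
                QP.preCons e.1 (QP.castSrc e.2.symm q),
                assocPair_nil_left _,
                by
                  simp only [QP.length_preCons, QP.length_castSrc, QP.length] at *
                  push_cast
                  omega⟩ : Lam Q asc (l + 1)) e.1 rfl)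
namespace LeavittAux

variable (k : Type) [Field k] (Q : FQ)

/-- Concrete model of `kQ/J²`: pairs (vertex coefficients, arrow coefficients). -/
def Conc : Type := (Q.V → k) × (Q.E → k)

instance : AddCommGroup (Conc k Q) :=
  inferInstanceAs (AddCommGroup ((Q.V → k) × (Q.E → k)))
instance : Module k (Conc k Q) :=
  inferInstanceAs (Module k ((Q.V → k) × (Q.E → k)))

instance : Mul (Conc k Q) :=
  ⟨fun x y => (x.1 * y.1, fun e => x.1 (Q.t e) * y.2 e + x.2 e * y.1 (Q.s e))⟩
instance : One (Conc k Q) := ⟨((1 : Q.V → k), 0)⟩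

variable {k Q}

lemma cext {x y : Conc k Q} (h1 : x.1 = y.1) (h2 : x.2 = y.2) : x = y := Prod.ext h1 h2
lemma cmul_fst (x y : Conc k Q) : (x * y).1 = x.1 * y.1 := rfl
lemma cmul_snd (x y : Conc k Q) (e : Q.E) :
    (x * y).2 e = x.1 (Q.t e) * y.2 e + x.2 e * y.1 (Q.s e) := rfl
lemma cone_fst : (1 : Conc k Q).1 = 1 := rfl
lemma cone_snd : (1 : Conc k Q).2 = 0 := rfl
lemma cadd_fst (x y : Conc k Q) : (x + y).1 = x.1 + y.1 := rfl
lemma cadd_snd (x y : Conc k Q) : (x + y).2 = x.2 + y.2 := rfl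
lemma czero_fst : (0 : Conc k Q).1 = 0 := rfl
lemma czero_snd : (0 : Conc k Q).2 = 0 := rfl
lemma csmul_fst (c : k) (x : Conc k Q) : (c • x).1 = c • x.1 := rfl
lemma csmul_snd (c : k) (x : Conc k Q) : (c • x).2 = c • x.2 := rfl

variable (k Q)

instance : Ring (Conc k Q) :=
  { (inferInstance : AddCommGroup (Conc k Q)),
    (inferInstance : Mul (Conc k Q)), (inferInstance : One (Conc k Q)) with
    mul_assoc := by
      intro x y z
      refine cext ?_ ?_
      · simp only [cmul_fst, mul_assoc]
      · funext e
        simp only [cmul_snd, cmul_fst, Pi.mul_apply]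
        ring
    one_mul := by
      intro x
      refine cext ?_ ?_
      · simp only [cmul_fst, cone_fst, one_mul]
      · funext e
        simp only [cmul_snd, cone_fst, cone_snd, Pi.one_apply, Pi.zero_apply]
        ring
    mul_one := by
      intro x
      refine cext ?_ ?_
      · simp only [cmul_fst, cone_fst, mul_one]
      · funext e
        simp only [cmul_snd, cone_fst, cone_snd, Pi.one_apply, Pi.zero_apply]
        ring
    left_distrib := by
      intro x y z
      refine cext ?_ ?_
      · simp only [cmul_fst, cadd_fst, mul_add]
      · funext e
        simp only [cmul_snd, cadd_fst, cadd_snd, Pi.add_apply, cmul_fst]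
        ring
    right_distrib := by
      intro x y z
      refine cext ?_ ?_
      · simp only [cmul_fst, cadd_fst, add_mul]
      · funext e
        simp only [cmul_snd, cadd_fst, cadd_snd, Pi.add_apply, cmul_fst]
        ring
    zero_mul := by
      intro x
      refine cext ?_ ?_
      · simp only [cmul_fst, czero_fst, zero_mul]
      · funext e
        simp only [cmul_snd, czero_fst, czero_snd, Pi.zero_apply]
        ring
    mul_zero := by
      intro x
      refine cext ?_ ?_
      · simp only [cmul_fst, czero_fst, zero_mul, mul_zero]
      · funext e
        simp only [cmul_snd, czero_fst, czero_snd, Pi.zero_apply]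
        ring }

instance : Algebra k (Conc k Q) :=
  Algebra.ofModule
    (fun c x y => by
      refine cext ?_ ?_
      · simp only [cmul_fst, csmul_fst, smul_mul_assoc]
      · funext e
        simp only [cmul_snd, csmul_fst, csmul_snd, Pi.smul_apply, smul_eq_mul]
        ring)
    (fun c x y => by
      refine cext ?_ ?_
      · simp only [cmul_fst, csmul_fst, mul_smul_comm]
      · funext e
        simp only [cmul_snd, csmul_fst, csmul_snd, Pi.smul_apply, smul_eq_mul]
        ring)

/-- The evaluation of the generators in the concrete model. -/
def genVal : AGen Q → Conc k Q
  | AGen.vtx i => (Pi.single i 1, 0)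
  | AGen.ar e => (0, Pi.single e 1)

variable {k Q}

lemma genVal_vtx (i : Q.V) : genVal k Q (AGen.vtx i) = ((Pi.single i 1 : Q.V → k), (0 : Q.E → k)) := rfl
lemma genVal_ar (e : Q.E) : genVal k Q (AGen.ar e) = ((0 : Q.V → k), (Pi.single e 1 : Q.E → k)) := rfl
lemma cmk_fst (f : Q.V → k) (g : Q.E → k) : ((f, g) : Conc k Q).1 = f := rfl
lemma cmk_snd (f : Q.V → k) (g : Q.E → k) : ((f, g) : Conc k Q).2 = g := rfl

variable (k Q)

/-- Projections as additive maps. -/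
def cfstHom : Conc k Q →+ (Q.V → k) :=
  { toFun := fun x => x.1, map_zero' := rfl, map_add' := fun _ _ => rfl }
def csndHom : Conc k Q →+ (Q.E → k) :=
  { toFun := fun x => x.2, map_zero' := rfl, map_add' := fun _ _ => rfl }

lemma conc_rel : ∀ ⦃x y : FreeAlgebra k (AGen Q)⦄, ARel k Q x y →
    FreeAlgebra.lift k (genVal k Q) x = FreeAlgebra.lift k (genVal k Q) y := by
  intro x y h
  induction h with
  | vtx_mul i j =>
      by_cases hij : i = j
      · subst hij
        rw [if_pos rfl]
        simp only [map_mul, FreeAlgebra.lift_ι_apply, genVal_vtx]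
        refine cext ?_ ?_
        · erw [cmul_fst]; simp only [cmul_fst, cmk_fst]
          funext v
          by_cases hv : v = i <;> simp [Pi.single_apply, hv]
        · funext e
          erw [cmul_snd]; simp only [cmul_snd, cmk_fst, cmk_snd, Pi.zero_apply, mul_zero, zero_mul, add_zero]
      · rw [if_neg hij, map_zero]
        simp only [map_mul, FreeAlgebra.lift_ι_apply, genVal_vtx]
        refine cext ?_ ?_
        · erw [cmul_fst]; simp only [cmul_fst, cmk_fst, czero_fst]
          funext v
          rcases eq_or_ne v i with rfl | hv
          · simp [Pi.single_apply, Ne.symm hij]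
          · simp [Pi.single_apply, hv]
        · funext e
          erw [cmul_snd]; simp only [cmul_snd, cmk_fst, cmk_snd, Pi.zero_apply, mul_zero, zero_mul,
            add_zero, czero_snd]
  | sum_vtx =>
      rw [map_sum, map_one]
      refine cext ?_ ?_
      · show cfstHom k Q (∑ i : Q.V, FreeAlgebra.lift k (genVal k Q) (FreeAlgebra.ι k (AGen.vtx i))) = (1 : Conc k Q).1
        rw [map_sum, cone_fst]
        have : ∀ i : Q.V, cfstHom k Q (FreeAlgebra.lift k (genVal k Q) (FreeAlgebra.ι k (AGen.vtx i))) = Pi.single i 1 := by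
          intro i
          rw [FreeAlgebra.lift_ι_apply, genVal_vtx]
          rfl
        rw [Finset.sum_congr rfl fun i _ => this i]
        funext v
        rw [Finset.sum_apply]
        simp [Pi.single_apply]
      · show csndHom k Q (∑ i : Q.V, FreeAlgebra.lift k (genVal k Q) (FreeAlgebra.ι k (AGen.vtx i))) = (1 : Conc k Q).2
        rw [map_sum, cone_snd]
        have : ∀ i : Q.V, csndHom k Q (FreeAlgebra.lift k (genVal k Q) (FreeAlgebra.ι k (AGen.vtx i))) = 0 := by
          intro i
          rw [FreeAlgebra.lift_ι_apply, genVal_vtx]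
          rfl
        rw [Finset.sum_congr rfl fun i _ => this i]
        simp
  | vtx_ar e =>
      simp only [map_mul, FreeAlgebra.lift_ι_apply, genVal_vtx, genVal_ar]
      refine cext ?_ ?_
      · erw [cmul_fst]; simp only [cmul_fst, cmk_fst, mul_zero]
      · funext f
        erw [cmul_snd]; simp only [cmul_snd, cmk_fst, cmk_snd, Pi.zero_apply, zero_mul, add_zero, mul_zero]
        rcases eq_or_ne f e with rfl | hf
        · simp
        · simp [Pi.single_apply, hf]
  | ar_vtx e =>
      simp only [map_mul, FreeAlgebra.lift_ι_apply, genVal_vtx, genVal_ar]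
      refine cext ?_ ?_
      · erw [cmul_fst]; simp only [cmul_fst, cmk_fst, zero_mul]
      · funext f
        erw [cmul_snd]; simp only [cmul_snd, cmk_fst, cmk_snd, Pi.zero_apply, zero_mul, zero_add, mul_zero]
        rcases eq_or_ne f e with rfl | hf
        · simp
        · simp [Pi.single_apply, hf]
  | rad_sq e f =>
      simp only [map_mul, FreeAlgebra.lift_ι_apply, genVal_ar, map_zero]
      refine cext ?_ ?_
      · erw [cmul_fst]; simp only [cmul_fst, cmk_fst, mul_zero, czero_fst]
      · funext g
        erw [cmul_snd]; simp only [cmul_snd, cmk_fst, cmk_snd, Pi.zero_apply, zero_mul, mul_zero,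
          add_zero, czero_snd]

/-- The comparison map from `A` to the concrete model. -/
def psi : AlgA k Q →ₐ[k] Conc k Q :=
  RingQuot.liftAlgHom k ⟨FreeAlgebra.lift k (genVal k Q), conc_rel k Q⟩

lemma psi_vtxA (i : Q.V) : psi k Q (vtxA k Q i) = (Pi.single i 1, (0 : Q.E → k)) := by
  rw [vtxA, psi, RingQuot.liftAlgHom_mkAlgHom_apply, FreeAlgebra.lift_ι_apply]
  rfl

lemma psi_arA (e : Q.E) : psi k Q (arA k Q e) = ((0 : Q.V → k), Pi.single e 1) := by
  rw [arA, psi, RingQuot.liftAlgHom_mkAlgHom_apply, FreeAlgebra.lift_ι_apply]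
  rfl

/-- The `k`-linear functional on `A` extracting the coefficient of the arrow `e`. -/
def coefE (e : Q.E) : AlgA k Q →ₗ[k] k :=
  { toFun := fun a => (psi k Q a).2 e,
    map_add' := fun a b => by
      show (psi k Q (a + b)).2 e = (psi k Q a).2 e + (psi k Q b).2 e
      rw [map_add, cadd_snd]; rfl,
    map_smul' := fun c a => by
      show (psi k Q (c • a)).2 e = c • (psi k Q a).2 e
      rw [map_smul, csmul_snd]; rfl }

lemma coefE_arA (e f : Q.E) :
    coefE k Q e (arA k Q f) = if f = e then 1 else 0 := by
  show (psi k Q (arA k Q f)).2 e = _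
  rw [psi_arA]
  simp [Pi.single_apply, eq_comm]

lemma coefE_vtxA (e : Q.E) (i : Q.V) : coefE k Q e (vtxA k Q i) = 0 := by
  show (psi k Q (vtxA k Q i)).2 e = _
  rw [psi_vtxA]
  rfl

end LeavittAux
namespace LeavittAux

variable {Q : FQ}

/-- The list of arrows of a path, leftmost (last) arrow first. -/
def arrows : ∀ {i j : Q.V}, QP Q i j → List Q.E
  | _, _, .nil _ => []
  | _, _, .cons p e _ => e :: arrows p

lemma arrows_castSrc {i i' j : Q.V} (h : i = i') (p : QP Q i j) :
    arrows (QP.castSrc h p) = arrows p := by subst h; rfl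

lemma arrows_preCons (e : Q.E) : ∀ {j : Q.V} (p : QP Q (Q.t e) j),
    arrows (QP.preCons e p) = arrows p ++ [e]
  | _, .nil _ => by simp [QP.preCons, arrows]
  | _, .cons p f hf => by
      simp only [QP.preCons, arrows, arrows_preCons e p, List.cons_append]

lemma length_eq_arrows : ∀ {i j : Q.V} (p : QP Q i j), p.length = (arrows p).length
  | _, _, .nil _ => by simp [QP.length, arrows]
  | _, _, .cons p e he => by
      simp only [QP.length, arrows, List.length_cons, length_eq_arrows p]

lemma eq_of_arrows : ∀ {i j j' : Q.V} (p : QP Q i j) (p' : QP Q i j'),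
    arrows p = arrows p' → j = j' ∧ HEq p p'
  | _, _, _, .nil _, .nil _, _ => ⟨rfl, HEq.rfl⟩
  | _, _, _, .nil _, .cons _ _ _, h => by simp [arrows] at h
  | _, _, _, .cons _ _ _, .nil _, h => by simp [arrows] at h
  | _, _, _, .cons p e he, .cons p' e' he', h => by
      simp only [arrows, List.cons.injEq] at h
      obtain ⟨rfl, h2⟩ := h
      obtain ⟨rfl, hp⟩ := eq_of_arrows p p' h2
      rw [heq_iff_eq] at hp
      subst hp
      exact ⟨rfl, HEq.rfl⟩

lemma firstArrow_eq_getLast : ∀ {i j : Q.V} (p : QP Q i j),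
    QP.firstArrow p = (arrows p).getLast?
  | _, _, .nil _ => by simp [QP.firstArrow, arrows]
  | _, _, .cons p e he => by
      rw [show QP.firstArrow (QP.cons p e he) = some ((QP.firstArrow p).getD e) by
        simp [QP.firstArrow]]
      rw [show arrows (QP.cons p e he) = e :: arrows p by simp [arrows]]
      rw [firstArrow_eq_getLast p]
      cases hl : arrows p with
      | nil => simp
      | cons a l => simp [List.getLast?]

lemma firstArrow_preCons (e : Q.E) {j : Q.V} (p : QP Q (Q.t e) j) :
    QP.firstArrow (QP.preCons e p) = some e := by
  rw [firstArrow_eq_getLast, arrows_preCons]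
  simp

/-- Extensionality for `Lam` in terms of endpoints and arrow lists. -/
lemma Lam.ext' {asc : ∀ i : Q.V, (∃ e, Q.t e = i) → Q.E} {l : ℤ} {x y : Lam Q asc l}
    (ha : x.a = y.a) (hb : x.b = y.b)
    (hp : arrows x.p = arrows y.p) (hq : arrows x.q = arrows y.q) : x = y := by
  obtain ⟨a, i, b, p, q, ok, dg⟩ := x
  obtain ⟨a', i', b', p', q', ok', dg'⟩ := y
  dsimp only at ha hb hp hq
  subst ha
  subst hb
  obtain ⟨rfl, hpp⟩ := eq_of_arrows p p' hp
  rw [heq_iff_eq] at hpp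
  subst hpp
  obtain ⟨-, hqq⟩ := eq_of_arrows q q' hq
  rw [heq_iff_eq] at hqq
  subst hqq
  rfl

/-- If a path has a first arrow, it decomposes with that arrow first. -/
lemma decomp_of_firstArrow {e : Q.E} : ∀ {a b : Q.V} (q : QP Q a b),
    QP.firstArrow q = some e →
    Q.s e = a ∧ ∃ q' : QP Q (Q.t e) b, arrows q = arrows q' ++ [e]
  | _, _, .nil _, h => by simp [QP.firstArrow] at h
  | _, _, .cons q' f hf, h => by
      rw [show QP.firstArrow (QP.cons q' f hf) = some ((QP.firstArrow q').getD f) by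
        simp [QP.firstArrow], Option.some_inj] at h
      cases hfa : QP.firstArrow q' with
      | none =>
          rw [hfa] at h
          subst h
          have hnil : arrows q' = [] := by
            rw [firstArrow_eq_getLast] at hfa
            exact List.getLast?_eq_none_iff.mp hfa
          obtain ⟨rfl, -⟩ := eq_of_arrows q' (QP.nil _) (by simpa [arrows] using hnil)
          refine ⟨hf, QP.nil _, ?_⟩
          simp [arrows, hnil]
      | some c =>
          rw [hfa] at h
          subst h
          obtain ⟨hse, q'', hq''⟩ := decomp_of_firstArrow q' hfa
          refine ⟨hse, QP.cons q'' f ?_, ?_⟩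
          · exact hf
          · simp [arrows, hq'']

lemma firstArrow_none_of_arrows_nil {i j : Q.V} (p : QP Q i j) (h : arrows p = []) :
    QP.firstArrow p = none := by
  rw [firstArrow_eq_getLast, h]
  rfl

/-- A `cons` associated pair restricts to an associated pair. -/
lemma assocPair_of_cons {asc : ∀ i : Q.V, (∃ e, Q.t e = i) → Q.E}
    {a j b : Q.V} {p : QP Q a j} {e : Q.E} {he : Q.s e = j} {q : QP Q a b}
    (h : AssocPair Q asc (QP.cons p e he) q) : AssocPair Q asc p q := by
  intro c hc hqc
  refine h c ?_ hqc
  rw [show QP.firstArrow (QP.cons p e he) = some ((QP.firstArrow p).getD e) by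
    simp [QP.firstArrow], hc]
  rfl

end LeavittAux
namespace LeavittAux

variable (k : Type) [Field k] (Q : FQ)

lemma vtxA_mul_vtxA (i j : Q.V) :
    vtxA k Q i * vtxA k Q j = if i = j then vtxA k Q i else 0 := by
  have h := RingQuot.mkAlgHom_rel k (ARel.vtx_mul (k := k) (Q := Q) i j)
  rw [map_mul] at h
  by_cases hij : i = j
  · rw [if_pos hij]
    rw [if_pos hij] at h
    exact h
  · rw [if_neg hij]
    rw [if_neg hij, map_zero] at h
    exact h

lemma sum_vtxA : ∑ i : Q.V, vtxA k Q i = 1 := by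
  have h := RingQuot.mkAlgHom_rel k (ARel.sum_vtx (k := k) (Q := Q))
  rw [map_sum, map_one] at h
  exact h

lemma vtxA_mul_arA (i : Q.V) (e : Q.E) :
    vtxA k Q i * arA k Q e = if i = Q.t e then arA k Q e else 0 := by
  have h0 := RingQuot.mkAlgHom_rel k (ARel.vtx_ar (k := k) (Q := Q) e)
  rw [map_mul] at h0
  have h : vtxA k Q (Q.t e) * arA k Q e = arA k Q e := h0
  by_cases hi : i = Q.t e
  · rw [if_pos hi, hi]
    exact h
  · rw [if_neg hi, ← h, ← mul_assoc, vtxA_mul_vtxA, if_neg hi, zero_mul]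

lemma arA_mul_vtxA'' (e : Q.E) (j : Q.V) :
    arA k Q e * vtxA k Q j = if j = Q.s e then arA k Q e else 0 := by
  by_cases hj : j = Q.s e
  · rw [if_pos hj, hj, arA_mul_vtxA]
  · rw [if_neg hj, ← arA_mul_vtxA k Q e, mul_assoc, vtxA_mul_vtxA,
      if_neg (fun h => hj h.symm), mul_zero]

lemma arA_mul_arA (e f : Q.E) : arA k Q e * arA k Q f = 0 := by
  have h := RingQuot.mkAlgHom_rel k (ARel.rad_sq (k := k) (Q := Q) e f)
  rw [map_mul, map_zero] at h
  exact h

/-- The generators `e_i`, `α` of `A` as a `k`-vector space. -/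
def genSet : Set (AlgA k Q) := Set.range (vtxA k Q) ∪ Set.range (arA k Q)

lemma one_mem_spanGen : (1 : AlgA k Q) ∈ Submodule.span k (genSet k Q) := by
  rw [← sum_vtxA k Q]
  exact Submodule.sum_mem _ fun i _ =>
    Submodule.subset_span (Or.inl ⟨i, rfl⟩)

lemma gen_mul_gen_mem {x y : AlgA k Q} (hx : x ∈ genSet k Q) (hy : y ∈ genSet k Q) :
    x * y ∈ Submodule.span k (genSet k Q) := by
  rcases hx with ⟨i, rfl⟩ | ⟨e, rfl⟩ <;> rcases hy with ⟨j, rfl⟩ | ⟨f, rfl⟩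
  · rw [vtxA_mul_vtxA]
    split
    · exact Submodule.subset_span (Or.inl ⟨i, rfl⟩)
    · exact Submodule.zero_mem _
  · rw [vtxA_mul_arA]
    split
    · exact Submodule.subset_span (Or.inr ⟨f, rfl⟩)
    · exact Submodule.zero_mem _
  · rw [arA_mul_vtxA'']
    split
    · exact Submodule.subset_span (Or.inr ⟨e, rfl⟩)
    · exact Submodule.zero_mem _
  · rw [arA_mul_arA]
    exact Submodule.zero_mem _

lemma mul_mem_spanGen {x y : AlgA k Q} (hx : x ∈ Submodule.span k (genSet k Q))
    (hy : y ∈ Submodule.span k (genSet k Q)) :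
    x * y ∈ Submodule.span k (genSet k Q) := by
  induction hx using Submodule.span_induction with
  | mem x hx =>
      induction hy using Submodule.span_induction with
      | mem y hy => exact gen_mul_gen_mem k Q hx hy
      | zero => rw [mul_zero]; exact Submodule.zero_mem _
      | add y z _ _ hy hz => rw [mul_add]; exact Submodule.add_mem _ hy hz
      | smul c y _ hy => rw [mul_smul_comm]; exact Submodule.smul_mem _ _ hy
  | zero => rw [zero_mul]; exact Submodule.zero_mem _
  | add x z _ _ hx hz => rw [add_mul]; exact Submodule.add_mem _ hx hz
  | smul c x _ hx => rw [smul_mul_assoc]; exact Submodule.smul_mem _ _ hx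

lemma mem_spanGen (a : AlgA k Q) : a ∈ Submodule.span k (genSet k Q) := by
  obtain ⟨x, rfl⟩ := RingQuot.mkAlgHom_surjective k (ARel k Q) a
  induction x with
  | grade0 c =>
      rw [AlgHom.commutes, Algebra.algebraMap_eq_smul_one]
      exact Submodule.smul_mem _ _ (one_mem_spanGen k Q)
  | grade1 g =>
      cases g with
      | vtx i => exact Submodule.subset_span (Or.inl ⟨i, rfl⟩)
      | ar e => exact Submodule.subset_span (Or.inr ⟨e, rfl⟩)
  | mul a b ha hb =>
      rw [map_mul]
      exact mul_mem_spanGen k Q ha hb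
  | add a b ha hb =>
      rw [map_add]
      exact Submodule.add_mem _ ha hb

end LeavittAux
namespace LeavittAux

variable (k : Type) [Field k] (Q : FQ)

/-- Generators of `P_i` as a `k`-vector space. -/
def pgenSet (i : Q.V) : Set ↥(Pmod k Q i) :=
  {(⟨vtxA k Q i, vtxA_mem k Q i⟩ : ↥(Pmod k Q i))} ∪
    {v | ∃ (e : Q.E) (he : Q.s e = i), v = ⟨arA k Q e, arA_mem k Q e he⟩}

lemma pmod_subtype_span (i : Q.V) (v : ↥(Pmod k Q i)) :
    v ∈ Submodule.span k (pgenSet k Q i) := by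
  obtain ⟨a, ha⟩ := Submodule.mem_span_singleton.mp v.2
  have ha' : a * vtxA k Q i = (v : AlgA k Q) := ha
  set g : ↥(Pmod k Q i) →ₗ[k] AlgA k Q := ((Pmod k Q i).subtype).restrictScalars k with hg
  have key : (v : AlgA k Q) ∈ Submodule.map g (Submodule.span k (pgenSet k Q i)) := by
    rw [← ha']
    have h1 : a ∈ Submodule.span k (genSet k Q) := mem_spanGen k Q a
    have h2 : a * vtxA k Q i = LinearMap.mulRight k (vtxA k Q i) a := rfl
    rw [h2]
    have h3 : LinearMap.mulRight k (vtxA k Q i) a ∈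
        Submodule.map (LinearMap.mulRight k (vtxA k Q i)) (Submodule.span k (genSet k Q)) :=
      Submodule.mem_map_of_mem h1
    rw [Submodule.map_span] at h3
    refine Submodule.span_le.mpr ?_ h3
    rintro b ⟨c, hc, rfl⟩
    rcases hc with ⟨j, rfl⟩ | ⟨e, rfl⟩
    · show vtxA k Q j * vtxA k Q i ∈ _
      rw [vtxA_mul_vtxA]
      split
      · next h =>
          subst h
          exact ⟨⟨vtxA k Q j, vtxA_mem k Q j⟩,
            Submodule.subset_span (Or.inl rfl), rfl⟩
      · exact Submodule.zero_mem _
    · show arA k Q e * vtxA k Q i ∈ _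
      rw [arA_mul_vtxA'']
      split
      · next h =>
          exact ⟨⟨arA k Q e, arA_mem k Q e h.symm⟩,
            Submodule.subset_span (Or.inr ⟨e, h.symm, rfl⟩), rfl⟩
      · exact Submodule.zero_mem _
  obtain ⟨w, hw, hgw⟩ := key
  have : w = v := Subtype.coe_injective hgw
  rwa [← this]

variable {Q}
variable (asc : ∀ i : Q.V, (∃ e, Q.t e = i) → Q.E) (l : ℤ)

/-- The set `B^l₀ ∪ {e_i ζ}` generating `P^l` over `k`. -/
def bigSet : Set (PL k Q asc l) :=
  (Set.range fun x : Lam Q asc l => zE (k := k) x) ∪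
    Set.range (fun y : Σ x : Lam Q asc l, {e : Q.E // Q.s e = x.i} =>
      zA (k := k) y.1 y.2.1 y.2.2)

lemma mem_span_bigSet (u : PL k Q asc l) : u ∈ Submodule.span k (bigSet k asc l) := by
  classical
  rw [← DFinsupp.sum_single (f := u)]
  refine Submodule.dfinsuppSum_mem _ _ _ fun x _ => ?_
  set L : ↥(Pmod k Q x.i) →ₗ[k] PL k Q asc l :=
    (DFinsupp.lsingle (R := AlgA k Q) (M := fun x : Lam Q asc l => ↥(Pmod k Q x.i)) x).restrictScalars k with hL
  have h1 : DFinsupp.single x (u x) = L (u x) := rfl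
  rw [h1]
  have h2 : L (u x) ∈ Submodule.map L (Submodule.span k (pgenSet k Q x.i)) :=
    Submodule.mem_map_of_mem (pmod_subtype_span k Q x.i (u x))
  rw [Submodule.map_span] at h2
  refine Submodule.span_le.mpr ?_ h2
  rintro b ⟨c, hc, rfl⟩
  rcases hc with rfl | ⟨e, he, rfl⟩
  · exact Submodule.subset_span (Or.inl ⟨x, rfl⟩)
  · exact Submodule.subset_span (Or.inr ⟨⟨x, e, he⟩, rfl⟩)

/-- The coordinate functional extracting the coefficient of `α ζ_x` (with `α = e`). -/
def coord (x : Lam Q asc l) (e : Q.E) : PL k Q asc l →ₗ[k] k :=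
  (coefE k Q e).comp
    ((((Pmod k Q x.i).subtype).restrictScalars k).comp
      ((DFinsupp.lapply (R := AlgA k Q) x).restrictScalars k))

lemma coord_apply (x : Lam Q asc l) (e : Q.E) (u : PL k Q asc l) :
    coord k asc l x e u = coefE k Q e ((u x : ↥(Pmod k Q x.i)) : AlgA k Q) := rfl

lemma coord_single (x y : Lam Q asc l) (e : Q.E) (v : ↥(Pmod k Q y.i)) :
    coord k asc l x e (DFinsupp.single y v) =
      if h : y = x then coefE k Q e ((h ▸ v : ↥(Pmod k Q x.i)) : AlgA k Q) else 0 := by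
  rw [coord_apply]
  by_cases h : y = x
  · subst h
    rw [dif_pos rfl, DFinsupp.single_eq_same]
  · rw [dif_neg h, DFinsupp.single_eq_of_ne (Ne.symm h)]
    simp

lemma coord_zE (x y : Lam Q asc l) (e : Q.E) : coord k asc l x e (zE y) = 0 := by
  rw [zE, coord_single]
  by_cases h : y = x
  · subst h
    rw [dif_pos rfl]
    exact coefE_vtxA k Q e y.i
  · rw [dif_neg h]

lemma coord_zA (x y : Lam Q asc l) (e f : Q.E) (hf : Q.s f = y.i) :
    coord k asc l x e (zA y f hf) = if y = x ∧ f = e then 1 else 0 := by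
  rw [zA, coord_single]
  by_cases h : y = x
  · subst h
    rw [dif_pos rfl]
    rw [coefE_arA]
    by_cases hfe : f = e
    · simp [hfe]
    · simp [hfe]
  · rw [dif_neg h]
    simp [h]

end LeavittAux
namespace LeavittAux

variable {k : Type} [Field k] {Q : FQ}
variable {asc : ∀ i : Q.V, (∃ e, Q.t e = i) → Q.E}

lemma asc_congr {i j : Q.V} (hij : i = j) (h : ∃ e, Q.t e = i) (h' : ∃ e, Q.t e = j) :
    asc i h = asc j h' := by
  subst hij
  rfl

lemma isAssoc_asc (hasc : ∀ (i : Q.V) (h : ∃ e, Q.t e = i), Q.t (asc i h) = i)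
    (i : Q.V) (h : ∃ e, Q.t e = i) : IsAssoc Q asc (asc i h) := by
  show asc (Q.t (asc i h)) ⟨asc i h, rfl⟩ = asc i h
  exact asc_congr (hasc i h) _ h

lemma eq_of_isAssoc {β e : Q.E} (hte : Q.t β = Q.t e)
    (h1 : IsAssoc Q asc e) (h2 : IsAssoc Q asc β) : β = e := by
  have hβ : asc (Q.t β) ⟨β, rfl⟩ = β := h2
  have he : asc (Q.t e) ⟨e, rfl⟩ = e := h1
  rw [← hβ, ← he]
  exact asc_congr hte _ _

lemma arrows_nil_of_firstArrow_none {i j : Q.V} (p : QP Q i j)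
    (h : QP.firstArrow p = none) : arrows p = [] := by
  rw [firstArrow_eq_getLast] at h
  exact List.getLast?_eq_none_iff.mp h

variable (δ : ∀ l : ℤ, PL k Q asc l →ₗ[AlgA k Q] PL k Q asc (l + 1))
variable (l : ℤ)

/-- Linear independence of the `α ζ_x`. -/
lemma zA_linearIndependent :
    LinearIndependent k
      (fun y : Σ x : Lam Q asc l, {e : Q.E // Q.s e = x.i} =>
        zA (k := k) y.1 y.2.1 y.2.2) := by
  classical
  rw [linearIndependent_iff']
  intro s g hsum y hy
  have h := congrArg (coord k asc l y.1 y.2.1) hsum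
  rw [map_sum, map_zero] at h
  simp only [map_smul, smul_eq_mul, coord_zA] at h
  rw [Finset.sum_eq_single_of_mem y hy (fun j _ hne => ?_)] at h
  · simpa using h
  · by_cases hc : j.1 = y.1 ∧ j.2.1 = y.2.1
    · exfalso
      apply hne
      obtain ⟨hc1, hc2⟩ := hc
      obtain ⟨j1, j2⟩ := j
      obtain ⟨y1, y2⟩ := y
      dsimp only at hc1 hc2
      subst hc1
      cases Subtype.ext hc2
      rfl
    · rw [if_neg hc, mul_zero]

/-- `α ζ_x` is in the image of `δ` when `(αp, q)` is an associated pair. -/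
lemma zA_mem_range_of_assoc (hδ : IsLeavittDiff k Q asc δ) (a j b : Q.V) (p : QP Q a j) (q : QP Q a b)
    (ok : AssocPair Q asc p q) (dg : (q.length : ℤ) - (p.length : ℤ) = l + 1)
    (e : Q.E) (he : Q.s e = j)
    (hap : AssocPair Q asc (QP.cons p e he) q) :
    ∃ u, δ l u = zA (⟨a, j, b, p, q, ok, dg⟩ : Lam Q asc (l + 1)) e he := by
  have dgx : (q.length : ℤ) - ((QP.cons p e he).length : ℤ) = l := by
    have : (QP.cons p e he).length = p.length + 1 := by simp [QP.length]
    rw [this]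
    push_cast
    omega
  exact ⟨zE ⟨a, Q.t e, b, QP.cons p e he, q, hap, dgx⟩,
    hδ.2.1 l a j b p e he q hap dgx ok dg⟩

end LeavittAux
namespace LeavittAux

variable {k : Type} [Field k] {Q : FQ}
variable {asc : ∀ i : Q.V, (∃ e, Q.t e = i) → Q.E}
variable (δ : ∀ l : ℤ, PL k Q asc l →ₗ[AlgA k Q] PL k Q asc (l + 1)) (l : ℤ)

lemma delta_zE_indep (hQ : Q.NoSources)
    (hasc : ∀ (i : Q.V) (h : ∃ e, Q.t e = i), Q.t (asc i h) = i)
    (hδ : IsLeavittDiff k Q asc δ) (c : Lam Q asc l →₀ k)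
    (hc : (c.sum fun x a => a • δ l (zE (k := k) x)) = 0) : c = 0 := by
  classical
  have happ : ∀ (x' : Lam Q asc (l + 1)) (e' : Q.E),
      (c.sum fun x a => a * coord k asc (l + 1) x' e' (δ l (zE x))) = 0 := by
    intro x' e'
    have h := congrArg (coord k asc (l + 1) x' e') hc
    rw [map_finsuppSum, map_zero] at h
    simpa only [map_smul, smul_eq_mul] using h
  -- Step 1: coefficients of `(e_a, q)`-indexed elements vanish
  have hnil : ∀ y₀ : Lam Q asc l, arrows y₀.p = [] → c y₀ = 0 := by
    intro y₀ hp0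
    by_cases hy₀ : y₀ ∈ c.support
    case neg => exact Finsupp.notMem_support_iff.mp hy₀
    obtain ⟨a, i, b, p, q, ok, dg⟩ := y₀
    dsimp only at hp0
    obtain ⟨hia, hp⟩ := eq_of_arrows p (QP.nil a) (by simpa [arrows] using hp0)
    have hia2 := hia.symm
    subst hia2
    rw [heq_iff_eq] at hp
    subst hp
    have hte₀ : Q.t (asc a (hQ a)) = a := hasc a (hQ a)
    have hassoc₀ : IsAssoc Q asc (asc a (hQ a)) := isAssoc_asc hasc a (hQ a)
    have dg₀' : ((QP.preCons (asc a (hQ a)) (QP.castSrc hte₀.symm q)).length : ℤ) -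
        ((QP.nil (Q.s (asc a (hQ a)))).length : ℤ) = l + 1 := by
      rw [QP.length_preCons, QP.length_castSrc]
      have h0 : (QP.nil (Q.s (asc a (hQ a)))).length = 0 := by simp [QP.length]
      have h1 : (QP.nil a).length = 0 := by simp [QP.length]
      rw [h0]
      rw [h1] at dg
      push_cast at dg ⊢
      omega
    have key := happ ⟨Q.s (asc a (hQ a)), Q.s (asc a (hQ a)), b, QP.nil (Q.s (asc a (hQ a))),
      QP.preCons (asc a (hQ a)) (QP.castSrc hte₀.symm q), assocPair_nil_left _, dg₀'⟩
      (asc a (hQ a))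
    have hother : ∀ y ∈ c.support, y ≠ (⟨a, a, b, QP.nil a, q, ok, dg⟩ : Lam Q asc l) →
        c y * coord k asc (l + 1)
          ⟨Q.s (asc a (hQ a)), Q.s (asc a (hQ a)), b, QP.nil (Q.s (asc a (hQ a))),
            QP.preCons (asc a (hQ a)) (QP.castSrc hte₀.symm q), assocPair_nil_left _, dg₀'⟩
          (asc a (hQ a)) (δ l (zE y)) = 0 := by
      intro y _ hne
      obtain ⟨a2, i2, b2, p2, q2, ok2, dg2⟩ := y
      cases p2 with
      | nil =>
          rw [hδ.2.2 l a2 b2 q2 ok2 dg2, map_sum]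
          rw [Finset.sum_eq_zero fun ε _ => ?_, mul_zero]
          rw [coord_zA, if_neg]
          rintro ⟨hT, hε⟩
          apply hne
          have hb2 : b2 = b := congrArg Lam.b hT
          have hqA : arrows q2 = arrows q := by
            have h5 := congrArg (fun z : Lam Q asc (l + 1) => arrows z.q) hT
            dsimp only at h5
            rw [arrows_preCons, arrows_castSrc, arrows_preCons, arrows_castSrc, hε] at h5
            exact List.append_cancel_right h5
          have ha2 : a2 = a := by
            have h6 : Q.t (asc a (hQ a)) = a2 := hε ▸ ε.2
            exact h6.symm.trans hte₀
          exact Lam.ext' ha2 hb2 (by simp [arrows]) hqA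
      | @cons j2 p2' f2 hf2 =>
          have hlen2 : (QP.cons p2' f2 hf2).length = p2'.length + 1 := by simp [QP.length]
          have dg2' : (q2.length : ℤ) - (p2'.length : ℤ) = l + 1 := by
            rw [hlen2] at dg2
            push_cast at dg2 ⊢
            omega
          rw [hδ.2.1 l a2 j2 b2 p2' f2 hf2 q2 ok2 dg2 (assocPair_of_cons ok2) dg2']
          rw [coord_zA, if_neg, mul_zero]
          rintro ⟨hT, hff⟩
          have hpA : arrows p2' = [] := by
            have h5 := congrArg (fun z : Lam Q asc (l + 1) => arrows z.p) hT
            dsimp only at h5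
            simpa [arrows] using h5
          have hqA : arrows q2 =
              arrows (QP.castSrc hte₀.symm q) ++ [asc a (hQ a)] := by
            have h5 := congrArg (fun z : Lam Q asc (l + 1) => arrows z.q) hT
            dsimp only at h5
            rw [arrows_preCons] at h5
            exact h5
          have hfq : QP.firstArrow q2 = some (asc a (hQ a)) := by
            rw [firstArrow_eq_getLast, hqA]
            simp
          have hfp : QP.firstArrow (QP.cons p2' f2 hf2) = some (asc a (hQ a)) := by
            rw [show QP.firstArrow (QP.cons p2' f2 hf2) =
              some ((QP.firstArrow p2').getD f2) by simp [QP.firstArrow]]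
            rw [firstArrow_none_of_arrows_nil p2' hpA]
            rw [Option.getD_none, hff]
          exact absurd hassoc₀ (ok2 _ hfp hfq)
    rw [Finsupp.sum, Finset.sum_eq_single_of_mem _ hy₀ hother] at key
    rw [hδ.2.2 l a b q ok dg, map_sum] at key
    rw [Finset.sum_eq_single_of_mem (⟨asc a (hQ a), hte₀⟩ : {e : Q.E // Q.t e = a})
      (Finset.mem_univ _) (fun ε _ hne => ?_)] at key
    · rw [coord_zA, if_pos ⟨rfl, rfl⟩, mul_one] at key
      exact key
    · rw [coord_zA, if_neg]
      rintro ⟨-, h2⟩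
      exact hne (Subtype.ext h2)
  -- Step 2: all coefficients vanish
  have hall : ∀ y₀ : Lam Q asc l, c y₀ = 0 := by
    intro y₀
    by_cases hy₀ : y₀ ∈ c.support
    case neg => exact Finsupp.notMem_support_iff.mp hy₀
    obtain ⟨a, i, b, p, q, ok, dg⟩ := y₀
    cases p with
    | nil => exact hnil ⟨a, a, b, QP.nil a, q, ok, dg⟩ (by simp [arrows])
    | @cons j p' f hf =>
        have hlen : (QP.cons p' f hf).length = p'.length + 1 := by simp [QP.length]
        have dg' : (q.length : ℤ) - (p'.length : ℤ) = l + 1 := by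
          rw [hlen] at dg
          push_cast at dg ⊢
          omega
        have key := happ ⟨a, j, b, p', q, assocPair_of_cons ok, dg'⟩ f
        have hother : ∀ y ∈ c.support,
            y ≠ (⟨a, Q.t f, b, QP.cons p' f hf, q, ok, dg⟩ : Lam Q asc l) →
            c y * coord k asc (l + 1) ⟨a, j, b, p', q, assocPair_of_cons ok, dg'⟩ f
              (δ l (zE y)) = 0 := by
          intro y _ hne
          obtain ⟨a2, i2, b2, p2, q2, ok2, dg2⟩ := y
          cases p2 with
          | nil =>
              rw [hnil ⟨a2, a2, b2, QP.nil a2, q2, ok2, dg2⟩ (by simp [arrows]), zero_mul]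
          | @cons j2 p2' f2 hf2 =>
              have hlen2 : (QP.cons p2' f2 hf2).length = p2'.length + 1 := by simp [QP.length]
              have dg2' : (q2.length : ℤ) - (p2'.length : ℤ) = l + 1 := by
                rw [hlen2] at dg2
                push_cast at dg2 ⊢
                omega
              rw [hδ.2.1 l a2 j2 b2 p2' f2 hf2 q2 ok2 dg2 (assocPair_of_cons ok2) dg2']
              rw [coord_zA, if_neg, mul_zero]
              rintro ⟨hT, hff⟩
              apply hne
              have ha2 : a2 = a := congrArg Lam.a hT
              have hb2 : b2 = b := congrArg Lam.b hT
              have hpA : arrows p2' = arrows p' :=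
                congrArg (fun z : Lam Q asc (l + 1) => arrows z.p) hT
              have hqA : arrows q2 = arrows q :=
                congrArg (fun z : Lam Q asc (l + 1) => arrows z.q) hT
              refine Lam.ext' ha2 hb2 ?_ hqA
              show arrows (QP.cons p2' f2 hf2) = arrows (QP.cons p' f hf)
              rw [show arrows (QP.cons p2' f2 hf2) = f2 :: arrows p2' by simp [arrows]]
              rw [show arrows (QP.cons p' f hf) = f :: arrows p' by simp [arrows]]
              rw [hpA, hff]
        rw [Finsupp.sum, Finset.sum_eq_single_of_mem _ hy₀ hother] at key
        rw [hδ.2.1 l a j b p' f hf q ok dg (assocPair_of_cons ok) dg'] at key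
        rw [coord_zA, if_pos ⟨rfl, rfl⟩, mul_one] at key
        exact key
  ext y
  rw [hall y]
  rfl

end LeavittAux
namespace LeavittAux

variable {k : Type} [Field k] {Q : FQ}
variable {asc : ∀ i : Q.V, (∃ e, Q.t e = i) → Q.E}
variable (δ : ∀ l : ℤ, PL k Q asc l →ₗ[AlgA k Q] PL k Q asc (l + 1)) (l : ℤ)

lemma zA_congr {l : ℤ} {x x' : Lam Q asc l} (h : x = x') (e : Q.E)
    (he : Q.s e = x.i) (he' : Q.s e = x'.i) : zA (k := k) x e he = zA x' e he' := by
  subst h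
  rfl

lemma span_zA_le_ker (hδ : IsLeavittDiff k Q asc δ) {l : ℤ} :
    Submodule.span k
        (Set.range (fun y : Σ x : Lam Q asc l, {e : Q.E // Q.s e = x.i} =>
          zA (k := k) y.1 y.2.1 y.2.2)) ≤
      (LinearMap.ker (δ l)).restrictScalars k := by
  rw [Submodule.span_le]
  rintro _ ⟨y, rfl⟩
  rw [SetLike.mem_coe, Submodule.restrictScalars_mem, LinearMap.mem_ker]
  exact hδ.1 _ y.1 y.2.1 y.2.2

lemma span_eq_ker (hQ : Q.NoSources)
    (hasc : ∀ (i : Q.V) (h : ∃ e, Q.t e = i), Q.t (asc i h) = i)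
    (hδ : IsLeavittDiff k Q asc δ) :
    Submodule.span k
        (Set.range (fun y : Σ x : Lam Q asc l, {e : Q.E // Q.s e = x.i} =>
          zA (k := k) y.1 y.2.1 y.2.2)) =
      (LinearMap.ker (δ l)).restrictScalars k := by
  apply le_antisymm
  · exact span_zA_le_ker δ hδ
  · intro u hu
    rw [Submodule.restrictScalars_mem, LinearMap.mem_ker] at hu
    have hbig := mem_span_bigSet k asc l u
    unfold bigSet at hbig
    rw [Submodule.span_union] at hbig
    obtain ⟨v, hv, w, hw, rfl⟩ := Submodule.mem_sup.mp hbig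
    have hδw : δ l w = 0 := by
      have := span_zA_le_ker δ hδ hw
      rwa [Submodule.restrictScalars_mem, LinearMap.mem_ker] at this
    rw [map_add, hδw, add_zero] at hu
    rw [Finsupp.mem_span_range_iff_exists_finsupp] at hv
    obtain ⟨cf, hcf⟩ := hv
    have hz : (cf.sum fun x a => a • δ l (zE (k := k) x)) = 0 := by
      have h0 : ((δ l).restrictScalars k) (cf.sum fun x a => a • zE (k := k) x) = 0 := by
        show δ l (cf.sum fun x a => a • zE (k := k) x) = 0
        rw [hcf]; exact hu
      rw [map_finsuppSum] at h0
      simpa only [map_smul, LinearMap.coe_restrictScalars] using h0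
    have hcf0 := delta_zE_indep δ l hQ hasc hδ cf hz
    have hv0 : v = 0 := by
      rw [← hcf, hcf0, Finsupp.sum_zero_index]
    rw [hv0, zero_add]
    exact hw

lemma span_eq_range (hQ : Q.NoSources)
    (hasc : ∀ (i : Q.V) (h : ∃ e, Q.t e = i), Q.t (asc i h) = i)
    (hδ : IsLeavittDiff k Q asc δ) :
    Submodule.span k
        (Set.range (fun y : Σ x : Lam Q asc (l + 1), {e : Q.E // Q.s e = x.i} =>
          zA (k := k) y.1 y.2.1 y.2.2)) =
      (LinearMap.range (δ l)).restrictScalars k := by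
  classical
  apply le_antisymm
  · rw [Submodule.span_le]
    rintro _ ⟨⟨⟨a, i, b, p, q, ok, dg⟩, e, he⟩, rfl⟩
    dsimp only at he ⊢
    subst he
    rw [SetLike.mem_coe, Submodule.restrictScalars_mem, LinearMap.mem_range]
    by_cases hap : AssocPair Q asc (QP.cons p e rfl) q
    · exact zA_mem_range_of_assoc δ l hδ a (Q.s e) b p q ok dg e rfl hap
    · have hex : ∃ d, QP.firstArrow (QP.cons p e rfl) = some d ∧
          QP.firstArrow q = some d ∧ IsAssoc Q asc d := by
        by_contra hno
        exact hap fun d h1 h2 hd => hno ⟨d, h1, h2, hd⟩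
      obtain ⟨d, hd1, hd2, hd3⟩ := hex
      rw [show QP.firstArrow (QP.cons p e rfl) = some ((QP.firstArrow p).getD e) by
        simp [QP.firstArrow], Option.some_inj] at hd1
      cases hfp : QP.firstArrow p with
      | some d0 =>
          rw [hfp, Option.getD_some] at hd1
          subst hd1
          exact absurd hd3 (ok d0 hfp hd2)
      | none =>
          rw [hfp, Option.getD_none] at hd1
          subst hd1
          have hpnil : arrows p = [] := arrows_nil_of_firstArrow_none p hfp
          obtain ⟨hsa, hp⟩ := eq_of_arrows p (QP.nil a) (by simpa [arrows] using hpnil)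
          have hsa2 := hsa.symm
          subst hsa2
          rw [heq_iff_eq] at hp
          subst hp
          obtain ⟨-, qq, hqq⟩ := decomp_of_firstArrow q hd2
          have hnil0 : (QP.nil (Q.s e)).length = 0 := by simp [QP.length]
          have hnilte : (QP.nil (Q.t e)).length = 0 := by simp [QP.length]
          have hlq : (q.length : ℤ) = l + 1 := by
            rw [hnil0] at dg
            push_cast at dg
            omega
          have hlq2 : q.length = qq.length + 1 := by
            rw [length_eq_arrows q, hqq, List.length_append, ← length_eq_arrows]
            simp
          have dgqq : ((qq.length : ℤ)) - ((QP.nil (Q.t e)).length : ℤ) = l := by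
            rw [hnilte]
            push_cast
            omega
          have pfd : ∀ β : {β : Q.E // Q.t β = Q.t e},
              ((QP.preCons β.1 (QP.castSrc β.2.symm qq)).length : ℤ) -
                ((QP.nil (Q.s β.1)).length : ℤ) = l + 1 := by
            intro β
            rw [QP.length_preCons, QP.length_castSrc]
            have h0 : (QP.nil (Q.s β.1)).length = 0 := by simp [QP.length]
            rw [h0]
            push_cast
            omega
          have hform' : δ l (zE ⟨Q.t e, Q.t e, b, QP.nil (Q.t e), qq,
                assocPair_nil_left _, dgqq⟩) =
              ∑ β : {β : Q.E // Q.t β = Q.t e},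
                zA (k := k) ⟨Q.s β.1, Q.s β.1, b, QP.nil (Q.s β.1),
                  QP.preCons β.1 (QP.castSrc β.2.symm qq), assocPair_nil_left _,
                  pfd β⟩ β.1 rfl :=
            hδ.2.2 l (Q.t e) b qq (assocPair_nil_left _) dgqq
          have hmem : ∀ β : {β : Q.E // Q.t β = Q.t e},
              β ≠ (⟨e, rfl⟩ : {β : Q.E // Q.t β = Q.t e}) →
              ∃ u, δ l u = zA (k := k) ⟨Q.s β.1, Q.s β.1, b, QP.nil (Q.s β.1),
                QP.preCons β.1 (QP.castSrc β.2.symm qq), assocPair_nil_left _,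
                pfd β⟩ β.1 rfl := by
            intro β hβ
            have hβ1 : β.1 ≠ e := fun h => hβ (Subtype.ext h)
            refine zA_mem_range_of_assoc δ l hδ _ _ _ _ _ _ _ β.1 rfl ?_
            intro d h1 h2 hd
            have hdβ : d = β.1 := by
              rw [show QP.firstArrow (QP.cons (QP.nil (Q.s β.1)) β.1 rfl) =
                some ((QP.firstArrow (QP.nil (Q.s β.1))).getD β.1) by
                  simp [QP.firstArrow]] at h1
              rw [show QP.firstArrow (QP.nil (Q.s β.1)) = none by simp [QP.firstArrow],
                Option.getD_none, Option.some_inj] at h1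
              exact h1.symm
            subst hdβ
            exact hβ1 (eq_of_isAssoc β.2 hd3 hd)
          set S := Finset.univ.erase (⟨e, rfl⟩ : {β : Q.E // Q.t β = Q.t e}) with hS
          refine ⟨zE ⟨Q.t e, Q.t e, b, QP.nil (Q.t e), qq, assocPair_nil_left _, dgqq⟩ -
            ∑ β ∈ S, (if h : β = (⟨e, rfl⟩ : {β : Q.E // Q.t β = Q.t e}) then 0
              else Classical.choose (hmem β h)), ?_⟩
          have hg : ∀ β ∈ S,
              δ l (if h : β = (⟨e, rfl⟩ : {β : Q.E // Q.t β = Q.t e}) then 0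
                else Classical.choose (hmem β h)) =
              zA (k := k) ⟨Q.s β.1, Q.s β.1, b, QP.nil (Q.s β.1),
                QP.preCons β.1 (QP.castSrc β.2.symm qq), assocPair_nil_left _,
                pfd β⟩ β.1 rfl := by
            intro β hβ
            have hne := Finset.ne_of_mem_erase hβ
            rw [dif_neg hne]
            exact Classical.choose_spec (hmem β hne)
          rw [map_sub, hform', map_sum, Finset.sum_congr rfl hg,
            ← Finset.add_sum_erase _ _
              (Finset.mem_univ (⟨e, rfl⟩ : {β : Q.E // Q.t β = Q.t e})), ← hS,
            add_sub_cancel_right]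
          refine zA_congr ?_ e _ _
          refine Lam.ext' rfl rfl rfl ?_
          show arrows (QP.preCons e (QP.castSrc _ qq)) = arrows q
          rw [arrows_preCons, arrows_castSrc, ← hqq]
  · rintro w hw
    rw [Submodule.restrictScalars_mem, LinearMap.mem_range] at hw
    obtain ⟨u, rfl⟩ := hw
    have hbig := mem_span_bigSet k asc l u
    induction hbig using Submodule.span_induction with
    | mem x hx =>
        rcases hx with ⟨x₀, rfl⟩ | ⟨y, rfl⟩
        · obtain ⟨a, i, b, p, q, ok, dg⟩ := x₀
          cases p with
          | nil =>
              rw [hδ.2.2 l a b q ok dg]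
              refine Submodule.sum_mem _ fun β _ => ?_
              exact Submodule.subset_span ⟨⟨_, β.1, rfl⟩, rfl⟩
          | @cons j p' f hf =>
              have hlen : (QP.cons p' f hf).length = p'.length + 1 := by simp [QP.length]
              have dg' : (q.length : ℤ) - (p'.length : ℤ) = l + 1 := by
                rw [hlen] at dg
                push_cast at dg ⊢
                omega
              rw [hδ.2.1 l a j b p' f hf q ok dg (assocPair_of_cons ok) dg']
              exact Submodule.subset_span
                ⟨⟨⟨a, j, b, p', q, assocPair_of_cons ok, dg'⟩, f, hf⟩, rfl⟩
        · rw [hδ.1 l y.1 y.2.1 y.2.2]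
          exact Submodule.zero_mem _
    | zero =>
        rw [map_zero]
        exact Submodule.zero_mem _
    | add x y _ _ hx hy =>
        rw [map_add]
        exact Submodule.add_mem _ hx hy
    | smul c x _ hx =>
        have hs : δ l (c • x) = c • δ l x := map_smul ((δ l).restrictScalars k) c x
        rw [hs]
        exact Submodule.smul_mem _ _ hx

end LeavittAux
/-- **Kernels and images of the differential (Lemma 2.6).**  Let `Q` be a finite quiver
without sources and `δ` the differential of the projective Leavitt complex.  For each
`l ∈ ℤ`, the set `B^l₀ = {α ζ_{(p,q)} | (p,q) ∈ Λ^l_i, α ∈ Q₁, s(α) = i}` is a `k`-basis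
of `Ker δ^l`, and `B^{l+1}₀` is a `k`-basis of `Im δ^l`. -/
theorem ker_im_of_leavitt_differential (k : Type) [Field k]
    (Q : FQ) (hQ : Q.NoSources)
    (asc : ∀ i : Q.V, (∃ e, Q.t e = i) → Q.E)
    (hasc : ∀ (i : Q.V) (h : ∃ e, Q.t e = i), Q.t (asc i h) = i)
    (δ : ∀ l : ℤ, PL k Q asc l →ₗ[AlgA k Q] PL k Q asc (l + 1))
    (hδ : IsLeavittDiff k Q asc δ) (l : ℤ) :
    (LinearIndependent k
      (fun y : Σ x : Lam Q asc l, {e : Q.E // Q.s e = x.i} => zA (k := k) y.1 y.2.1 y.2.2)) ∧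
    Submodule.span k
        (Set.range (fun y : Σ x : Lam Q asc l, {e : Q.E // Q.s e = x.i} =>
          zA (k := k) y.1 y.2.1 y.2.2)) =
      (LinearMap.ker (δ l)).restrictScalars k ∧
    Submodule.span k
        (Set.range (fun y : Σ x : Lam Q asc (l + 1), {e : Q.E // Q.s e = x.i} =>
          zA (k := k) y.1 y.2.1 y.2.2)) =
      (LinearMap.range (δ l)).restrictScalars k := by
  exact ⟨LeavittAux.zA_linearIndependent (asc := asc) l,
    LeavittAux.span_eq_ker δ l hQ hasc hδ,
    LeavittAux.span_eq_range δ l hQ hasc hδ⟩
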